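/- arXiv:1309.6982 — 6 statements merged into one kernel-verified Lean document; each statement's English description precedes it below -/
import Mathlib

section
/- Let κ > 0, R > 0 and h ∈ C¹([0,R]), and set M := sup_{0≤s≤R}|h'(s)|. Define h̄(r) = (1/r)∫₀ʳ h(s) ds (with h̄(0) = h(0)) and f(r) = exp((κ/2)∫₀ʳ (h(s) − h̄(s))²/s ds). Then for every 0 ≤ r ≤ R, 1 ≤ f(r) ≤ exp(κ M² r² / 16). -/
noncomputable section

open Real Set MeasureTheory

/-- Radial average `h̄(r) = (1/r)∫₀ʳ h(s) ds`, with `h̄(0) = h(0)`. -/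
def radAvg1 (h : ℝ → ℝ) (r : ℝ) : ℝ :=
  if r = 0 then h 0 else (1 / r) * ∫ s in (0:ℝ)..r, h s

/-- Metric coefficient `f(r) = exp((κ/2)∫₀ʳ (h−h̄)²/s ds)`. -/
def metricF1 (κ : ℝ) (h : ℝ → ℝ) (r : ℝ) : ℝ :=
  Real.exp ((κ / 2) * ∫ s in (0:ℝ)..r, (h s - radAvg1 h s) ^ 2 / s)

/-- For `h ∈ C¹([0,R])` with `M = sup|h'|`:
`1 ≤ f(r) ≤ exp(κM²r²/16)` for all `0 ≤ r ≤ R`. -/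
theorem metricF_basic_estimate
    (κ R : ℝ) (hκ : 0 < κ) (hR : 0 < R) (h h' : ℝ → ℝ)
    (hd : ∀ r ∈ Icc (0:ℝ) R, HasDerivWithinAt h (h' r) (Icc 0 R) r)
    (hc : ContinuousOn h' (Icc 0 R)) :
    ∀ r ∈ Icc (0:ℝ) R,
      1 ≤ metricF1 κ h r ∧
      metricF1 κ h r
        ≤ Real.exp (κ * (sSup ((fun s => |h' s|) '' Icc 0 R)) ^ 2 * r ^ 2 / 16) := by
  set M : ℝ := sSup ((fun s => |h' s|) '' Icc 0 R) with hM
  have hconth : ContinuousOn h (Icc 0 R) := fun x hx =>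
    (hd x hx).continuousWithinAt
  -- M is an upper bound, and 0 ≤ M
  have hbdd : BddAbove ((fun s => |h' s|) '' Icc 0 R) :=
    (isCompact_Icc.image_of_continuousOn (hc.abs)).bddAbove
  have hMb : ∀ t ∈ Icc (0:ℝ) R, |h' t| ≤ M := fun t ht =>
    le_csSup hbdd ⟨t, ht, rfl⟩
  have hM0 : 0 ≤ M := le_trans (abs_nonneg _) (hMb 0 ⟨le_rfl, hR.le⟩)
  -- Lipschitz estimate
  have hlip : ∀ t ∈ Icc (0:ℝ) R, ∀ s ∈ Icc (0:ℝ) R, |h s - h t| ≤ M * |s - t| := by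
    intro t ht s hs
    have := (convex_Icc (0:ℝ) R).norm_image_sub_le_of_norm_hasDerivWithin_le
      hd (fun x hx => hMb x hx) ht hs
    simpa [Real.norm_eq_abs] using this
  -- key pointwise bound: |h s - h̄ s| ≤ M s / 2 for s ∈ (0, R]
  have hkey : ∀ s ∈ Ioc (0:ℝ) R, |h s - radAvg1 h s| ≤ M * s / 2 := by
    intro s hs
    have hs0 : (0:ℝ) < s := hs.1
    have hsub : Icc (0:ℝ) s ⊆ Icc 0 R := Icc_subset_Icc le_rfl hs.2
    have hih : IntervalIntegrable h volume 0 s :=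
      (hconth.mono (by simpa [uIcc_of_le hs0.le] using hsub)).intervalIntegrable
    have havg : radAvg1 h s = (1 / s) * ∫ t in (0:ℝ)..s, h t := by
      simp [radAvg1, hs0.ne']
    have hsplit : h s - radAvg1 h s = (1 / s) * ∫ t in (0:ℝ)..s, (h s - h t) := by
      rw [havg, intervalIntegral.integral_sub intervalIntegrable_const hih,
        intervalIntegral.integral_const]
      field_simp
      ring
    have hibound : |∫ t in (0:ℝ)..s, (h s - h t)| ≤ M * s ^ 2 / 2 := by
      have h1 : |∫ t in (0:ℝ)..s, (h s - h t)| ≤ ∫ t in (0:ℝ)..s, |h s - h t| := by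
        simpa [Real.norm_eq_abs] using
          intervalIntegral.norm_integral_le_integral_norm (f := fun t => h s - h t) hs0.le
      have h2 : (∫ t in (0:ℝ)..s, |h s - h t|) ≤ ∫ t in (0:ℝ)..s, M * (s - t) := by
        apply intervalIntegral.integral_mono_on hs0.le
        · exact (intervalIntegrable_const.sub hih).abs
        · exact (intervalIntegrable_const.sub (continuous_id.intervalIntegrable _ _)).const_mul M
        · intro t ht
          have := hlip t (hsub ht) s (hsub ⟨hs0.le, le_rfl⟩)
          rwa [abs_of_nonneg (sub_nonneg.mpr ht.2)] at this
      have hid : IntervalIntegrable (fun x : ℝ => x) volume 0 s :=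
        (continuous_id.intervalIntegrable _ _)
      have h3 : (∫ t in (0:ℝ)..s, M * (s - t)) = M * s ^ 2 / 2 := by
        rw [intervalIntegral.integral_const_mul,
          intervalIntegral.integral_sub intervalIntegrable_const hid,
          intervalIntegral.integral_const, integral_id, smul_eq_mul]
        ring
      calc |∫ t in (0:ℝ)..s, (h s - h t)| ≤ _ := h1
        _ ≤ _ := h2
        _ = M * s ^ 2 / 2 := h3
    rw [hsplit, abs_mul, abs_of_nonneg (by positivity : (0:ℝ) ≤ 1 / s)]
    calc (1 / s) * |∫ t in (0:ℝ)..s, (h s - h t)|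
        ≤ (1 / s) * (M * s ^ 2 / 2) := by
          apply mul_le_mul_of_nonneg_left hibound (by positivity)
      _ = M * s / 2 := by field_simp
  intro r hr
  set F : ℝ → ℝ := fun s => (h s - radAvg1 h s) ^ 2 / s with hF
  have hr0 : (0:ℝ) ≤ r := hr.1
  have hFnn : ∀ s ∈ Icc (0:ℝ) r, 0 ≤ F s := by
    intro s hs
    rcases eq_or_lt_of_le hs.1 with hs0 | hs0
    · simp [hF, ← hs0, div_zero]
    · have : (0:ℝ) < s := hs0
      positivity
  have hFub : ∀ s ∈ Ioc (0:ℝ) r, F s ≤ M ^ 2 * s / 4 := by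
    intro s hs
    have hsR : s ∈ Ioc (0:ℝ) R := ⟨hs.1, hs.2.trans hr.2⟩
    have hb := hkey s hsR
    have hsq : (h s - radAvg1 h s) ^ 2 ≤ (M * s / 2) ^ 2 := by
      rw [← sq_abs]
      exact pow_le_pow_left₀ (abs_nonneg _) hb 2
    calc F s ≤ (M * s / 2) ^ 2 / s := div_le_div_of_nonneg_right hsq hs.1.le
      _ = M ^ 2 * s / 4 * (s / s) := by ring
      _ = M ^ 2 * s / 4 := by rw [div_self hsR.1.ne']; ring
  -- integrability of F on [0, r]
  have hFcont : ContinuousOn F (Ioc 0 r) := by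
    have hsub : Ioc (0:ℝ) r ⊆ Icc 0 R := fun x hx => ⟨hx.1.le, hx.2.trans hr.2⟩
    have hprim : ContinuousOn (fun x => ∫ t in (0:ℝ)..x, h t) (Icc 0 R) := by
      have := intervalIntegral.continuousOn_primitive_interval
        (a := (0:ℝ)) (b := R) (μ := volume) (f := h)
        (by rw [uIcc_of_le hR.le]
            exact hconth.integrableOn_compact isCompact_Icc)
      rwa [uIcc_of_le hR.le] at this
    have havgc : ContinuousOn (fun s => radAvg1 h s) (Ioc 0 r) := by
      have : ContinuousOn (fun s => (1 / s) * ∫ t in (0:ℝ)..s, h t) (Ioc 0 r) := by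
        apply ContinuousOn.mul
        · exact continuousOn_const.div continuousOn_id (fun x hx => hx.1.ne')
        · exact hprim.mono hsub
      exact this.congr (fun x hx => by simp [radAvg1, hx.1.ne'])
    exact (((hconth.mono hsub).sub havgc).pow 2).div continuousOn_id
      (fun x hx => hx.1.ne')
  have hFint : IntervalIntegrable F volume 0 r := by
    rw [intervalIntegrable_iff_integrableOn_Ioc_of_le hr0]
    refine ⟨hFcont.aestronglyMeasurable measurableSet_Ioc, ?_⟩
    apply MeasureTheory.HasFiniteIntegral.restrict_of_bounded
      (C := M ^ 2 * r / 4) measure_Ioc_lt_top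
    filter_upwards [ae_restrict_mem measurableSet_Ioc] with x hx
    rw [Real.norm_eq_abs, abs_of_nonneg (hFnn x ⟨hx.1.le, hx.2⟩)]
    exact (hFub x hx).trans (by nlinarith [hx.1.le, hx.2, sq_nonneg M])
  -- the integral bounds
  have hInn : 0 ≤ ∫ s in (0:ℝ)..r, F s :=
    intervalIntegral.integral_nonneg hr0 (fun u hu => hFnn u hu)
  have hIub : (∫ s in (0:ℝ)..r, F s) ≤ M ^ 2 * r ^ 2 / 8 := by
    have hmono : (∫ s in (0:ℝ)..r, F s) ≤ ∫ s in (0:ℝ)..r, M ^ 2 * s / 4 := by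
      apply intervalIntegral.integral_mono_on hr0 hFint
      · apply ContinuousOn.intervalIntegrable
        fun_prop
      · intro x hx
        rcases eq_or_lt_of_le hx.1 with h0 | h0
        · simp [hF, ← h0, div_zero]
        · exact hFub x ⟨h0, hx.2⟩
    have hval : (∫ s in (0:ℝ)..r, M ^ 2 * s / 4) = M ^ 2 * r ^ 2 / 8 := by
      have : (fun s : ℝ => M ^ 2 * s / 4) = fun s => (M ^ 2 / 4) * s := by
        funext s; ring
      rw [this, intervalIntegral.integral_const_mul, integral_id]
      ring
    linarith
  -- conclude
  constructor
  · rw [metricF1, ← Real.exp_zero]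
    apply Real.exp_le_exp.mpr
    positivity
  · rw [metricF1]
    apply Real.exp_le_exp.mpr
    calc κ / 2 * ∫ s in (0:ℝ)..r, F s ≤ κ / 2 * (M ^ 2 * r ^ 2 / 8) := by
          apply mul_le_mul_of_nonneg_left hIub (by positivity)
      _ = κ * M ^ 2 * r ^ 2 / 16 := by ring
end
end

section
/- Let Λ > 0, κ > 0, R > 0 and h ∈ C¹([0,R]); set M := sup_{0≤s≤R}|h'(s)| and K := exp(κ M² R² / 16). Define h̄(r) = (1/r)∫₀ʳ h(s) ds (with h̄(0) = h(0)), f(r) = exp((κ/2)∫₀ʳ (h − h̄)²/s ds), f̃(r) = (1/r)∫₀ʳ f(s) ds − (Λ/r)∫₀ʳ f(s) s² ds, and G(r) = (1/(2r))[(f(r) − f̃(r)) − Λ f(r) r²] for 0 < r ≤ R. If K κ M² / 16 ≤ Λ/3, then G(r) ≤ −(Λ/6) r for every 0 < r ≤ R. -/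
noncomputable section

open Real Set

/-- Metric coefficient `f̃(r) = (1/r)∫₀ʳ f ds − (Λ/r)∫₀ʳ f s² ds`. -/
def metricFt1 (Λ κ : ℝ) (h : ℝ → ℝ) (r : ℝ) : ℝ :=
  (1 / r) * (∫ s in (0:ℝ)..r, metricF1 κ h s)
    - (Λ / r) * (∫ s in (0:ℝ)..r, metricF1 κ h s * s ^ 2)

/-- Zeroth order coefficient `G(r) = (1/(2r))[(f − f̃) − Λ f r²]`. -/
def coefG1 (Λ κ : ℝ) (h : ℝ → ℝ) (r : ℝ) : ℝ :=
  (1 / (2 * r)) * ((metricF1 κ h r - metricFt1 Λ κ h r) - Λ * metricF1 κ h r * r ^ 2)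

/-- `|h(s) − h̄(s)| ≤ M s / 2` for Lipschitz `h`. -/
lemma avg_sub_bound (h : ℝ → ℝ) {R M : ℝ} (hR : 0 < R) (hM : 0 ≤ M)
    (hcont : ContinuousOn h (Icc 0 R))
    (hlip : ∀ a ∈ Icc (0:ℝ) R, ∀ b ∈ Icc (0:ℝ) R, |h b - h a| ≤ M * |b - a|) :
    ∀ s ∈ Icc (0:ℝ) R, |h s - radAvg1 h s| ≤ M * s / 2 := by
  intro s hs
  rcases eq_or_lt_of_le hs.1 with rfl | hs0
  · simp [radAvg1]
  have hsne : s ≠ 0 := ne_of_gt hs0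
  have hsub : Icc (0:ℝ) s ⊆ Icc 0 R := Icc_subset_Icc le_rfl hs.2
  have hInt : IntervalIntegrable h MeasureTheory.volume 0 s :=
    (hcont.mono hsub).intervalIntegrable_of_Icc hs.1
  have hIntAbs : IntervalIntegrable (fun t => |h s - h t|) MeasureTheory.volume 0 s := by
    apply ContinuousOn.intervalIntegrable_of_Icc hs.1
    exact (continuousOn_const.sub (hcont.mono hsub)).abs
  have hIntLin : IntervalIntegrable (fun t => M * (s - t)) MeasureTheory.volume 0 s :=
    (Continuous.intervalIntegrable (by continuity) 0 s)
  have key : |∫ t in (0:ℝ)..s, (h s - h t)| ≤ M * s ^ 2 / 2 := by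
    calc |∫ t in (0:ℝ)..s, (h s - h t)| ≤ ∫ t in (0:ℝ)..s, |h s - h t| :=
          intervalIntegral.abs_integral_le_integral_abs hs.1
      _ ≤ ∫ t in (0:ℝ)..s, M * (s - t) := by
          apply intervalIntegral.integral_mono_on hs.1 hIntAbs hIntLin
          intro t ht
          have := hlip t (hsub ht) s hs
          have habs : |s - t| = s - t := abs_of_nonneg (by linarith [ht.2])
          calc |h s - h t| ≤ M * |s - t| := this
            _ = M * (s - t) := by rw [habs]
      _ = M * s ^ 2 / 2 := by
          rw [intervalIntegral.integral_const_mul]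
          have : (∫ t in (0:ℝ)..s, (s - t)) = s ^ 2 / 2 := by
            rw [intervalIntegral.integral_sub (intervalIntegrable_const (c := s))
              ((continuous_id'.intervalIntegrable 0 s))]
            simp [integral_id]
            ring
          rw [this]; ring
  have hravg : radAvg1 h s = (1 / s) * ∫ t in (0:ℝ)..s, h t := by
    simp [radAvg1, hsne]
  have hdiff : h s - radAvg1 h s = (1 / s) * ∫ t in (0:ℝ)..s, (h s - h t) := by
    rw [hravg, intervalIntegral.integral_sub intervalIntegrable_const hInt]
    rw [intervalIntegral.integral_const]
    field_simp
    ring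
  rw [hdiff, abs_mul, abs_of_nonneg (by positivity : (0:ℝ) ≤ 1 / s)]
  calc (1 / s) * |∫ t in (0:ℝ)..s, (h s - h t)| ≤ (1 / s) * (M * s ^ 2 / 2) := by
        apply mul_le_mul_of_nonneg_left key (by positivity)
    _ = M * s / 2 := by field_simp

set_option maxHeartbeats 1000000 in
/-- For `h ∈ C¹([0,R])` with `M = sup|h'|` and `K = exp(κM²R²/16)`:
if `KκM²/16 ≤ Λ/3` then `G(r) ≤ −(Λ/6)r` for `0 < r ≤ R`. -/
theorem coefG_negative_linear_bound
    (Λ κ R : ℝ) (hΛ : 0 < Λ) (hκ : 0 < κ) (hR : 0 < R) (h h' : ℝ → ℝ)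
    (hd : ∀ r ∈ Icc (0:ℝ) R, HasDerivWithinAt h (h' r) (Icc 0 R) r)
    (hc : ContinuousOn h' (Icc 0 R))
    (hsmall : Real.exp (κ * (sSup ((fun s => |h' s|) '' Icc 0 R)) ^ 2 * R ^ 2 / 16)
        * κ * (sSup ((fun s => |h' s|) '' Icc 0 R)) ^ 2 / 16 ≤ Λ / 3) :
    ∀ r ∈ Ioc (0:ℝ) R, coefG1 Λ κ h r ≤ -(Λ / 6) * r := by
  set M := sSup ((fun s => |h' s|) '' Icc 0 R) with hMdef
  set K := Real.exp (κ * M ^ 2 * R ^ 2 / 16) with hKdef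
  clear_value K
  -- basic facts about M
  have hcont : ContinuousOn h (Icc 0 R) := fun x hx => (hd x hx).continuousWithinAt
  have hMbd : ∀ s ∈ Icc (0:ℝ) R, |h' s| ≤ M := by
    intro s hs
    exact le_csSup (isCompact_Icc.bddAbove_image hc.abs) ⟨s, hs, rfl⟩
  have hM0 : 0 ≤ M := le_trans (abs_nonneg _) (hMbd 0 ⟨le_rfl, hR.le⟩)
  have hlip : ∀ a ∈ Icc (0:ℝ) R, ∀ b ∈ Icc (0:ℝ) R, |h b - h a| ≤ M * |b - a| := by
    intro a ha b hb
    have := Convex.norm_image_sub_le_of_norm_hasDerivWithin_le hd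
      (fun x hx => hMbd x hx) (convex_Icc 0 R) ha hb
    simpa [Real.norm_eq_abs] using this
  have havg := avg_sub_bound h hR hM0 hcont hlip
  -- the integrand g
  set g : ℝ → ℝ := fun s => (h s - radAvg1 h s) ^ 2 / s with hgdef
  have hg0 : g 0 = 0 := by simp [hgdef]
  have hgnn : ∀ s ∈ Icc (0:ℝ) R, 0 ≤ g s := by
    intro s hs
    rcases eq_or_lt_of_le hs.1 with rfl | hs0
    · simp [hg0]
    · exact div_nonneg (sq_nonneg _) hs0.le
  have hgbd : ∀ s ∈ Icc (0:ℝ) R, g s ≤ M ^ 2 * s / 4 := by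
    intro s hs
    rcases eq_or_lt_of_le hs.1 with rfl | hs0
    · simp [hg0]
    · have h1 := havg s hs
      have h2 : (h s - radAvg1 h s) ^ 2 ≤ (M * s / 2) ^ 2 := by
        rw [← sq_abs]
        apply pow_le_pow_left₀ (abs_nonneg _) h1
      calc g s ≤ (M * s / 2) ^ 2 / s := by
            simp only [hgdef]; gcongr
        _ = M ^ 2 * s / 4 := by field_simp; ring
  -- continuity of radAvg1 on Ioc, hence of g
  have hIntcc : MeasureTheory.IntegrableOn h (Icc 0 R) MeasureTheory.volume :=
    hcont.integrableOn_compact isCompact_Icc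
  have hprim : ContinuousOn (fun x => ∫ t in (0:ℝ)..x, h t) (Icc 0 R) := by
    have := intervalIntegral.continuousOn_primitive (f := h) (a := 0) (b := R)
      (μ := MeasureTheory.volume) hIntcc
    apply this.congr
    intro x hx
    exact intervalIntegral.integral_of_le hx.1
  have hgcont : ContinuousOn g (Ioc 0 R) := by
    have hac : ContinuousOn (radAvg1 h) (Ioc 0 R) := by
      apply ContinuousOn.congr (f := fun s => (1 / s) * ∫ t in (0:ℝ)..s, h t)
      · exact (continuousOn_const.div continuousOn_id fun x hx => ne_of_gt hx.1).mul
          (hprim.mono Ioc_subset_Icc_self)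
      · intro x hx; simp [radAvg1, ne_of_gt hx.1]
    apply ContinuousOn.div
    · exact ((hcont.mono Ioc_subset_Icc_self).sub hac).pow 2
    · exact continuousOn_id
    · exact fun x hx => ne_of_gt hx.1
  -- g is interval integrable on [0,R]
  have hgInt : IntervalIntegrable g MeasureTheory.volume 0 R := by
    rw [intervalIntegrable_iff_integrableOn_Ioc_of_le hR.le]
    apply MeasureTheory.Integrable.mono'
      (g := fun _ => M ^ 2 * R / 4)
      (MeasureTheory.integrableOn_const measure_Ioc_lt_top.ne)
      (hgcont.aestronglyMeasurable measurableSet_Ioc)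
    rw [MeasureTheory.ae_restrict_iff' measurableSet_Ioc]
    filter_upwards with s hs
    rw [Real.norm_eq_abs, abs_of_nonneg (hgnn s (Ioc_subset_Icc_self hs))]
    calc g s ≤ M ^ 2 * s / 4 := hgbd s (Ioc_subset_Icc_self hs)
      _ ≤ M ^ 2 * R / 4 := by have h2 := hs.2; gcongr
  have hgIntSub : ∀ a b : ℝ, a ∈ Icc (0:ℝ) R → b ∈ Icc (0:ℝ) R →
      IntervalIntegrable g MeasureTheory.volume a b := by
    intro a b ha hb
    apply hgInt.mono_set
    rw [uIcc_of_le hR.le]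
    exact uIcc_subset_Icc ha hb
  -- primitive F
  set F : ℝ → ℝ := fun x => ∫ t in (0:ℝ)..x, g t with hFdef
  have hFmono : ∀ a b : ℝ, a ∈ Icc (0:ℝ) R → b ∈ Icc (0:ℝ) R → a ≤ b → F a ≤ F b := by
    intro a b ha hb hab
    have hsplit : F a + ∫ t in a..b, g t = F b :=
      intervalIntegral.integral_add_adjacent_intervals
        (hgIntSub 0 a ⟨le_rfl, hR.le⟩ ha) (hgIntSub a b ha hb)
    have hnn : 0 ≤ ∫ t in a..b, g t := by
      apply intervalIntegral.integral_nonneg hab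
      intro u hu
      exact hgnn u ⟨le_trans ha.1 hu.1, le_trans hu.2 hb.2⟩
    linarith
  have hF0 : F 0 = 0 := by simp [hFdef]
  have hFnn : ∀ x ∈ Icc (0:ℝ) R, 0 ≤ F x := by
    intro x hx
    have := hFmono 0 x ⟨le_rfl, hR.le⟩ hx hx.1
    linarith [hF0]
  have hFub : ∀ x ∈ Icc (0:ℝ) R, F x ≤ M ^ 2 * x ^ 2 / 8 := by
    intro x hx
    have hmono := intervalIntegral.integral_mono_on hx.1
      (hgIntSub 0 x ⟨le_rfl, hR.le⟩ hx)
      ((Continuous.intervalIntegrable (by continuity) 0 x) :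
        IntervalIntegrable (fun s => M ^ 2 * s / 4) MeasureTheory.volume 0 x)
      (fun u hu => hgbd u ⟨hu.1, le_trans hu.2 hx.2⟩)
    have hcomp : (∫ s in (0:ℝ)..x, M ^ 2 * s / 4) = M ^ 2 * x ^ 2 / 8 := by
      have : (fun s => M ^ 2 * s / 4) = fun s => (M ^ 2 / 4) * s := by
        funext s; ring
      rw [this, intervalIntegral.integral_const_mul, integral_id]
      ring
    calc F x ≤ ∫ s in (0:ℝ)..x, M ^ 2 * s / 4 := hmono
      _ = M ^ 2 * x ^ 2 / 8 := hcomp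
  -- f = exp((κ/2) F)
  have hfval : ∀ x, metricF1 κ h x = Real.exp ((κ / 2) * F x) := fun x => rfl
  have hf1 : ∀ x ∈ Icc (0:ℝ) R, 1 ≤ metricF1 κ h x := by
    intro x hx
    rw [hfval]
    exact Real.one_le_exp (mul_nonneg (by positivity) (hFnn x hx))
  have hfmono : ∀ a ∈ Icc (0:ℝ) R, ∀ b ∈ Icc (0:ℝ) R, a ≤ b →
      metricF1 κ h a ≤ metricF1 κ h b := by
    intro a ha b hb hab
    rw [hfval, hfval]
    exact Real.exp_le_exp.2 (mul_le_mul_of_nonneg_left (hFmono a b ha hb hab) (by positivity))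
  have hfK : ∀ x ∈ Icc (0:ℝ) R, metricF1 κ h x ≤ K := by
    intro x hx
    rw [hfval, hKdef]
    apply Real.exp_le_exp.2
    have h1 := hFub x hx
    have h2 : x ^ 2 ≤ R ^ 2 := pow_le_pow_left₀ hx.1 hx.2 2
    calc κ / 2 * F x ≤ κ / 2 * (M ^ 2 * x ^ 2 / 8) :=
          mul_le_mul_of_nonneg_left h1 (by positivity)
      _ = κ * M ^ 2 / 16 * x ^ 2 := by ring
      _ ≤ κ * M ^ 2 / 16 * R ^ 2 := mul_le_mul_of_nonneg_left h2 (by positivity)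
      _ = κ * M ^ 2 * R ^ 2 / 16 := by ring
  -- continuity and integrability of f
  have hFcont : ContinuousOn F (Icc 0 R) := by
    have hgIcc : MeasureTheory.IntegrableOn g (Icc 0 R) MeasureTheory.volume := by
      rw [integrableOn_Icc_iff_integrableOn_Ioc]
      rwa [intervalIntegrable_iff_integrableOn_Ioc_of_le hR.le] at hgInt
    have := intervalIntegral.continuousOn_primitive (f := g) (a := 0) (b := R)
      (μ := MeasureTheory.volume) hgIcc
    apply this.congr
    intro x hx
    exact intervalIntegral.integral_of_le hx.1
  have hfcont : ContinuousOn (metricF1 κ h) (Icc 0 R) :=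
    Real.continuous_exp.comp_continuousOn (continuousOn_const.mul hFcont)
  clear_value g F
  -- now fix r
  intro r hr
  have hr0 : 0 < r := hr.1
  have hrR : r ≤ R := hr.2
  have hrIcc : r ∈ Icc (0:ℝ) R := ⟨hr0.le, hrR⟩
  have hsubr : Icc (0:ℝ) r ⊆ Icc 0 R := Icc_subset_Icc le_rfl hrR
  have hfInt : IntervalIntegrable (metricF1 κ h) MeasureTheory.volume 0 r :=
    (hfcont.mono hsubr).intervalIntegrable_of_Icc hr0.le
  set fr := metricF1 κ h r with hfrdef
  clear_value fr
  have hfr1 : 1 ≤ fr := by rw [hfrdef]; exact hf1 r hrIcc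
  have hfrK : fr ≤ K := by rw [hfrdef]; exact hfK r hrIcc
  -- key pointwise difference bound
  have hdiffbd : ∀ s ∈ Icc (0:ℝ) r, fr - metricF1 κ h s ≤ Λ / 3 * r ^ 2 := by
    intro s hs
    have hsIcc : s ∈ Icc (0:ℝ) R := hsubr hs
    set x := (κ / 2) * (F r - F s) with hxdef
    clear_value x
    have hx0 : 0 ≤ x := by
      rw [hxdef]
      exact mul_nonneg (by positivity) (by linarith [hFmono s r hsIcc hrIcc hs.2])
    have hfs : metricF1 κ h s = fr * Real.exp (-x) := by
      rw [hfval, hfrdef, hfval, ← Real.exp_add]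
      congr 1
      rw [hxdef]; ring
    have hexp : 1 - Real.exp (-x) ≤ x := by
      have := Real.add_one_le_exp (-x)
      linarith
    have step1 : fr - metricF1 κ h s ≤ fr * x := by
      rw [hfs]
      have := mul_le_mul_of_nonneg_left hexp (le_trans zero_le_one hfr1)
      calc fr - fr * Real.exp (-x) = fr * (1 - Real.exp (-x)) := by ring
        _ ≤ fr * x := this
    have hxbd : x ≤ κ * M ^ 2 * r ^ 2 / 16 := by
      have h1 := hFub r hrIcc
      have h2 := hFnn s hsIcc
      calc x = κ / 2 * (F r - F s) := hxdef
        _ ≤ κ / 2 * F r := mul_le_mul_of_nonneg_left (by linarith) (by positivity)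
        _ ≤ κ / 2 * (M ^ 2 * r ^ 2 / 8) := mul_le_mul_of_nonneg_left h1 (by positivity)
        _ = κ * M ^ 2 * r ^ 2 / 16 := by ring
    have hK1 : (1:ℝ) ≤ K := le_trans hfr1 hfrK
    have step2 : fr * x ≤ K * (κ * M ^ 2 * r ^ 2 / 16) :=
      mul_le_mul hfrK hxbd hx0 (le_trans zero_le_one hK1)
    have hsm : K * κ * M ^ 2 / 16 ≤ Λ / 3 := hsmall
    calc fr - metricF1 κ h s ≤ fr * x := step1
      _ ≤ K * (κ * M ^ 2 * r ^ 2 / 16) := step2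
      _ = K * κ * M ^ 2 / 16 * r ^ 2 := by ring
      _ ≤ Λ / 3 * r ^ 2 := mul_le_mul_of_nonneg_right hsm (sq_nonneg r)
  -- bound 1 : fr - (1/r) ∫ f ≤ (Λ/3) r²
  set I1 := ∫ s in (0:ℝ)..r, metricF1 κ h s with hI1def
  clear_value I1
  have hb1 : fr - (1 / r) * I1 ≤ Λ / 3 * r ^ 2 := by
    have hIntSub : IntervalIntegrable (fun s => fr - metricF1 κ h s)
        MeasureTheory.volume 0 r := intervalIntegrable_const.sub hfInt
    have hmono := intervalIntegral.integral_mono_on hr0.le hIntSub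
      intervalIntegrable_const hdiffbd
    rw [intervalIntegral.integral_sub intervalIntegrable_const hfInt,
      intervalIntegral.integral_const, intervalIntegral.integral_const] at hmono
    simp only [sub_zero, smul_eq_mul] at hmono
    rw [← hI1def] at hmono
    have hstep : r * fr - I1 ≤ r * (Λ / 3 * r ^ 2) := hmono
    have h1r : (0:ℝ) < 1 / r := by positivity
    have hmul := mul_le_mul_of_nonneg_left hstep h1r.le
    have e1 : (1 / r) * (r * fr - I1) = fr - (1 / r) * I1 := by field_simp
    have e2 : (1 / r) * (r * (Λ / 3 * r ^ 2)) = Λ / 3 * r ^ 2 := by field_simp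
    linarith
  -- bound 2 : ∫ f s² ≤ fr r³ / 3
  set I2 := ∫ s in (0:ℝ)..r, metricF1 κ h s * s ^ 2 with hI2def
  clear_value I2
  have hb2 : I2 ≤ fr * r ^ 3 / 3 := by
    have hInt1 : IntervalIntegrable (fun s => metricF1 κ h s * s ^ 2)
        MeasureTheory.volume 0 r :=
      ((hfcont.mono hsubr).mul (continuousOn_pow 2)).intervalIntegrable_of_Icc hr0.le
    have hInt2 : IntervalIntegrable (fun s => fr * s ^ 2) MeasureTheory.volume 0 r :=
      Continuous.intervalIntegrable (by continuity) 0 r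
    have hmono := intervalIntegral.integral_mono_on hr0.le hInt1 hInt2
      (fun s hs => by
        simp only [hfrdef]
        exact mul_le_mul_of_nonneg_right (hfmono s (hsubr hs) r hrIcc hs.2) (sq_nonneg s))
    have hcomp : (∫ s in (0:ℝ)..r, fr * s ^ 2) = fr * r ^ 3 / 3 := by
      rw [intervalIntegral.integral_const_mul, integral_pow]
      ring
    rw [hI2def]
    calc (∫ s in (0:ℝ)..r, metricF1 κ h s * s ^ 2) ≤ ∫ s in (0:ℝ)..r, fr * s ^ 2 := hmono
      _ = fr * r ^ 3 / 3 := hcomp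
  -- combine
  have hb2' : (Λ / r) * I2 ≤ Λ / 3 * fr * r ^ 2 := by
    have h1 : (Λ / r) * I2 ≤ (Λ / r) * (fr * r ^ 3 / 3) :=
      mul_le_mul_of_nonneg_left hb2 (by positivity)
    calc (Λ / r) * I2 ≤ (Λ / r) * (fr * r ^ 3 / 3) := h1
      _ = Λ / 3 * fr * r ^ 2 := by field_simp
  have hkey : (fr - metricFt1 Λ κ h r) - Λ * fr * r ^ 2 ≤ -(Λ / 3) * r ^ 2 := by
    rw [metricFt1, ← hI1def, ← hI2def]
    have hfrpos : Λ * r ^ 2 * (fr - 1) ≥ 0 :=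
      mul_nonneg (by positivity) (by linarith)
    linarith [hb1, hb2']
  rw [coefG1, ← hfrdef]
  have hmul := mul_le_mul_of_nonneg_left hkey (by positivity : (0:ℝ) ≤ 1 / (2 * r))
  calc (1 / (2 * r)) * ((fr - metricFt1 Λ κ h r) - Λ * fr * r ^ 2)
      ≤ (1 / (2 * r)) * (-(Λ / 3) * r ^ 2) := hmul
    _ = -(Λ / 6) * r := by field_simp; ring
end
end

section
/- Let Λ > 0, K ≥ 1, u₁ > 0, and set r_c⁻ := √(3/(ΛK)). Let r : [0,u₁] → ℝ be differentiable with r'(u) ≤ −(1/2)(1 − (ΛK/3) r(u)²) for all u ∈ [0,u₁]. If r(u₁) ≥ r_c⁻, then r(u) ≥ r_c⁻ for every u ∈ [0,u₁]. -/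
noncomputable section

open Real Set

/-- Invariance of the region `r ≥ r_c⁻ = √(3/(ΛK))`:
if `r' ≤ −(1/2)(1 − (ΛK/3)r²)` on `[0,u₁]` and `r(u₁) ≥ r_c⁻`, then
`r(u) ≥ r_c⁻` for every `u ∈ [0,u₁]`. -/
theorem characteristics_stay_outside_inner_horizon
    (Λ K u₁ : ℝ) (hΛ : 0 < Λ) (hK : 1 ≤ K) (hu : 0 < u₁)
    (r r' : ℝ → ℝ)
    (hd : ∀ u ∈ Icc (0:ℝ) u₁, HasDerivWithinAt r (r' u) (Icc 0 u₁) u)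
    (hhigh : ∀ u ∈ Icc (0:ℝ) u₁, r' u ≤ -(1 / 2) * (1 - Λ * K / 3 * r u ^ 2))
    (hr₁ : Real.sqrt (3 / (Λ * K)) ≤ r u₁) :
    ∀ u ∈ Icc (0:ℝ) u₁, Real.sqrt (3 / (Λ * K)) ≤ r u := by
  intro u₀ hu₀
  by_contra hlt
  push_neg at hlt
  set rc := Real.sqrt (3 / (Λ * K)) with hrc
  have hΛK : 0 < Λ * K := mul_pos hΛ (lt_of_lt_of_le one_pos hK)
  have hrc0 : 0 < rc := Real.sqrt_pos.2 (by positivity)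
  have hrcsq : Λ * K / 3 * rc ^ 2 = 1 := by
    rw [hrc, sq, Real.mul_self_sqrt (by positivity)]
    field_simp
  have hcont : ContinuousOn r (Icc 0 u₁) := fun x hx => (hd x hx).continuousWithinAt
  obtain ⟨hu₀0, hu₀1⟩ := hu₀
  set v := max (r u₀) 0 with hv
  have hv_lt : v < rc := max_lt hlt hrc0
  have hv0 : (0:ℝ) ≤ v := le_max_right _ _
  -- the set of later times where r ≥ rc
  set S := Icc u₀ u₁ ∩ r ⁻¹' Ici rc with hSdef
  have hSclosed : IsClosed S :=
    (hcont.mono (Icc_subset_Icc hu₀0 le_rfl)).preimage_isClosed_of_isClosed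
      isClosed_Icc isClosed_Ici
  have hScomp : IsCompact S :=
    (isCompact_Icc (a := u₀) (b := u₁)).of_isClosed_subset hSclosed inter_subset_left
  have hSne : S.Nonempty := ⟨u₁, ⟨hu₀1, le_rfl⟩, hr₁⟩
  set t := sInf S with ht
  have htS : t ∈ S := hScomp.sInf_mem hSne
  obtain ⟨⟨htu₀, htu₁⟩, htr⟩ := htS
  have hu₀t : u₀ < t := by
    rcases lt_or_eq_of_le htu₀ with h | h
    · exact h
    · exact absurd (h ▸ htr) (not_le.2 hlt)
  -- the set of times in [u₀,t] where r ≤ v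
  set T := Icc u₀ t ∩ r ⁻¹' Iic v with hTdef
  have hTclosed : IsClosed T :=
    (hcont.mono (Icc_subset_Icc hu₀0 htu₁)).preimage_isClosed_of_isClosed
      isClosed_Icc isClosed_Iic
  have hTcomp : IsCompact T :=
    (isCompact_Icc (a := u₀) (b := t)).of_isClosed_subset hTclosed inter_subset_left
  have hTne : T.Nonempty := ⟨u₀, ⟨le_rfl, le_of_lt hu₀t⟩, show r u₀ ≤ v from le_max_left _ _⟩
  set s := sSup T with hs
  have hsT : s ∈ T := hTcomp.sSup_mem hTne
  obtain ⟨⟨hsu₀, hst⟩, hsr⟩ := hsT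
  have hst' : s < t := by
    rcases lt_or_eq_of_le hst with h | h
    · exact h
    · exfalso; rw [h] at hsr
      have h1 : r t ≤ v := hsr
      have h2 : rc ≤ r t := htr
      linarith
  have hs0 : (0:ℝ) ≤ s := le_trans hu₀0 hsu₀
  -- on (s,t), v < r x < rc
  have hkey : ∀ x ∈ Ioo s t, v < r x ∧ r x < rc := by
    intro x ⟨hx1, hx2⟩
    constructor
    · by_contra h
      push_neg at h
      have : x ∈ T := ⟨⟨le_trans hsu₀ hx1.le, hx2.le⟩, h⟩
      exact absurd (le_csSup hTcomp.bddAbove this) (not_le.2 hx1)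
    · by_contra h
      push_neg at h
      have : x ∈ S := ⟨⟨le_trans hsu₀ hx1.le, le_trans hx2.le htu₁⟩, h⟩
      exact absurd (csInf_le hScomp.bddBelow this) (not_le.2 hx2)
  -- r is strictly decreasing on [s,t]
  have hanti : StrictAntiOn r (Icc s t) := by
    apply strictAntiOn_of_deriv_neg (convex_Icc s t)
      (hcont.mono (Icc_subset_Icc hs0 htu₁))
    intro x hx
    rw [interior_Icc] at hx
    obtain ⟨hvr, hrrc⟩ := hkey x hx
    have hx01 : x ∈ Ioo (0:ℝ) u₁ := ⟨lt_of_le_of_lt hs0 hx.1, lt_of_lt_of_le hx.2 htu₁⟩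
    have hxIcc : x ∈ Icc (0:ℝ) u₁ := ⟨hx01.1.le, hx01.2.le⟩
    have hda : HasDerivAt r (r' x) x :=
      (hd x hxIcc).hasDerivAt (Icc_mem_nhds hx01.1 hx01.2)
    rw [hda.deriv]
    have hb := hhigh x hxIcc
    have hsq : r x ^ 2 < rc ^ 2 := sq_lt_sq' (by linarith) hrrc
    have : Λ * K / 3 * r x ^ 2 < 1 := by
      calc Λ * K / 3 * r x ^ 2 < Λ * K / 3 * rc ^ 2 := by
            apply mul_lt_mul_of_pos_left hsq (by positivity)
        _ = 1 := hrcsq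
    nlinarith
  have := hanti ⟨le_rfl, hst⟩ ⟨hst, le_rfl⟩ hst'
  have h1 : r s ≤ v := hsr
  have h2 : rc ≤ r t := htr
  linarith
end
end

section
/- Let Λ > 0, K ≥ 1, and set r_c⁻ := √(3/(ΛK)). Let u₁ < T and let r : [u₁,T] → ℝ be differentiable with r'(u) ≤ −(1/2)(1 − (ΛK/3) r(u)²) for all u, and suppose 0 ≤ r(u₁) =: r₁ < r_c⁻. If r(u) ≥ 0 for all u ∈ [u₁,T], then T − u₁ ≤ 2r₁ / (1 − (ΛK/3) r₁²); in particular, any such characteristic starting in the local region r₁ < r_c⁻ reaches the center r = 0 in finite Bondi time. -/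
noncomputable section

open Real Set

/-- Characteristics starting in the local region reach the center in
finite Bondi time: if `r' ≤ −(1/2)(1 − (ΛK/3)r²)` on `[u₁,T]`, `0 ≤ r(u₁) = r₁ < √(3/(ΛK))`,
and `r ≥ 0` on `[u₁,T]`, then `T − u₁ ≤ 2r₁/(1 − (ΛK/3)r₁²)`. -/
theorem characteristics_local_region_reach_center
    (Λ K u₁ T : ℝ) (hΛ : 0 < Λ) (hK : 1 ≤ K) (huT : u₁ < T)
    (r r' : ℝ → ℝ)
    (hd : ∀ u ∈ Icc u₁ T, HasDerivWithinAt r (r' u) (Icc u₁ T) u)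
    (hhigh : ∀ u ∈ Icc u₁ T, r' u ≤ -(1 / 2) * (1 - Λ * K / 3 * r u ^ 2))
    (hr₁0 : 0 ≤ r u₁) (hr₁ : r u₁ < Real.sqrt (3 / (Λ * K)))
    (hnn : ∀ u ∈ Icc u₁ T, 0 ≤ r u) :
    T - u₁ ≤ 2 * r u₁ / (1 - Λ * K / 3 * r u₁ ^ 2) := by
  have hΛK : 0 < Λ * K := by nlinarith
  set c : ℝ := Λ * K / 3 with hc_def
  have hc : 0 < c := by positivity
  set R : ℝ := Real.sqrt (3 / (Λ * K)) with hR_def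
  have hR2 : c * R ^ 2 = 1 := by
    rw [hR_def, Real.sq_sqrt (by positivity)]
    field_simp [hc_def]
    linarith
  have hR0 : 0 ≤ R := Real.sqrt_nonneg _
  have hm : 0 < 1 - c * r u₁ ^ 2 := by nlinarith
  have hcont : ContinuousOn r (Icc u₁ T) := fun u hu => (hd u hu).continuousWithinAt
  -- Step 1: r stays below R on [u₁, T]
  have hltR : ∀ u ∈ Icc u₁ T, r u < R := by
    by_contra h
    push_neg at h
    obtain ⟨u₀, hu₀, hRu₀⟩ := h
    set A : Set ℝ := Icc u₁ T ∩ r ⁻¹' (Ici R) with hA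
    have hAcl : IsClosed A := hcont.preimage_isClosed_of_isClosed isClosed_Icc isClosed_Ici
    have hAne : A.Nonempty := ⟨u₀, hu₀, hRu₀⟩
    have hAbdd : BddBelow A := ⟨u₁, fun x hx => hx.1.1⟩
    have hsA : sInf A ∈ A := hAcl.csInf_mem hAne hAbdd
    set s : ℝ := sInf A with hs_def
    have hs1 : u₁ ≤ s := hsA.1.1
    have hsT : s ≤ T := hsA.1.2
    have hrs : R ≤ r s := hsA.2
    have hlt : ∀ u ∈ Ico u₁ s, r u < R := by
      intro u hu
      by_contra hge
      push_neg at hge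
      have : s ≤ u := csInf_le hAbdd ⟨⟨hu.1, hu.2.le.trans hsT⟩, hge⟩
      exact absurd hu.2 (not_lt.2 this)
    have hu₁s : u₁ < s := by
      rcases eq_or_lt_of_le hs1 with h | h
      · exact absurd (h ▸ hrs) (not_le.2 hr₁)
      · exact h
    have hanti : AntitoneOn r (Icc u₁ s) := by
      have hdiff : ∀ x ∈ interior (Icc u₁ s), HasDerivAt r (r' x) x := by
        intro x hx
        rw [interior_Icc] at hx
        exact (hd x ⟨hx.1.le, (hx.2.trans_le hsT).le⟩).hasDerivAt
          (Icc_mem_nhds hx.1 (hx.2.trans_le hsT))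
      apply antitoneOn_of_deriv_nonpos (convex_Icc u₁ s)
        (hcont.mono (Icc_subset_Icc_right hsT))
        (fun x hx => (hdiff x hx).differentiableAt.differentiableWithinAt)
      intro x hx
      rw [(hdiff x hx).deriv]
      rw [interior_Icc] at hx
      have hxI : x ∈ Icc u₁ T := ⟨hx.1.le, (hx.2.trans_le hsT).le⟩
      have hrx : r x < R := hlt x ⟨hx.1.le, hx.2⟩
      have h0 : 0 ≤ r x := hnn x hxI
      have := hhigh x hxI
      nlinarith
    have := hanti ⟨le_refl u₁, hu₁s.le⟩ ⟨hs1, le_refl s⟩ hu₁s.le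
    nlinarith
  -- Step 2: r is antitone on [u₁, T]
  have hderivle : ∀ x ∈ Ioo u₁ T, HasDerivAt r (r' x) x := by
    intro x hx
    exact (hd x ⟨hx.1.le, hx.2.le⟩).hasDerivAt (Icc_mem_nhds hx.1 hx.2)
  have hanti : AntitoneOn r (Icc u₁ T) := by
    apply antitoneOn_of_deriv_nonpos (convex_Icc u₁ T) hcont
      (fun x hx => by
        rw [interior_Icc] at hx
        exact (hderivle x hx).differentiableAt.differentiableWithinAt)
    intro x hx
    rw [interior_Icc] at hx
    have hxI : x ∈ Icc u₁ T := ⟨hx.1.le, hx.2.le⟩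
    rw [(hderivle x hx).deriv]
    have hrx : r x < R := hltR x hxI
    have h0 : 0 ≤ r x := hnn x hxI
    have := hhigh x hxI
    nlinarith
  -- Step 3: uniform decrease
  set m : ℝ := (1 - c * r u₁ ^ 2) / 2 with hm_def
  have hmpos : 0 < m := by positivity
  have hanti2 : AntitoneOn (fun u => r u + m * u) (Icc u₁ T) := by
    have hdiff : ∀ x ∈ interior (Icc u₁ T), HasDerivAt (fun u => r u + m * id u) (r' x + m) x := by
      intro x hx
      rw [interior_Icc] at hx
      exact HasDerivAt.congr_deriv ((hderivle x hx).add ((hasDerivAt_id x).const_mul m)) (by ring)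
    apply antitoneOn_of_deriv_nonpos (convex_Icc u₁ T)
      (hcont.add (continuous_const.mul continuous_id).continuousOn)
      (fun x hx => (hdiff x hx).differentiableAt.differentiableWithinAt)
    intro x hx
    change deriv (fun u => r u + m * id u) x ≤ 0
    rw [(hdiff x hx).deriv]
    rw [interior_Icc] at hx
    have hxI : x ∈ Icc u₁ T := ⟨hx.1.le, hx.2.le⟩
    have hle : r x ≤ r u₁ := hanti (left_mem_Icc.2 huT.le) hxI hx.1.le
    have h0 : 0 ≤ r x := hnn x hxI
    have := hhigh x hxI
    have hsq : r x ^ 2 ≤ r u₁ ^ 2 := by nlinarith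
    nlinarith [mul_le_mul_of_nonneg_left hsq hc.le]
  have key := hanti2 (left_mem_Icc.2 huT.le) (right_mem_Icc.2 huT.le) huT.le
  simp only at key
  have hrT : 0 ≤ r T := hnn T (right_mem_Icc.2 huT.le)
  rw [le_div_iff₀ hm]
  nlinarith
end
end

section
/- Let α > 0, C₁ > 0, u₁ ≥ 0 and c ≥ u₁. Let r : [0,u₁] → ℝ be continuous with r(u) ≥ (1/(2α))·tanh(α(c − u)) for all u ∈ [0,u₁]. Then ∫₀^{u₁} exp(−2C₁ ∫_u^{u₁} r(s) ds) du ≤ 2^{C₁/α²}·(α/C₁); in particular the left-hand side is bounded by a constant depending only on α and C₁, independent of u₁ and c. -/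
noncomputable section

open Real Set

/-- Uniform integral bound along characteristics: if the radial
coordinate satisfies the tanh lower bound `r(u) ≥ (1/(2α))tanh(α(c − u))` on `[0,u₁]`,
then `∫₀^{u₁} exp(−2C₁∫_u^{u₁} r) du ≤ 2^{C₁/α²}·(α/C₁)`, independently of `u₁` and `c`. -/
theorem uniform_integral_bound_along_characteristics
    (α C₁ u₁ c : ℝ) (hα : 0 < α) (hC : 0 < C₁) (hu : 0 ≤ u₁) (hc : u₁ ≤ c)
    (r : ℝ → ℝ) (hr : ContinuousOn r (Icc 0 u₁))
    (hb : ∀ u ∈ Icc (0:ℝ) u₁, (1 / (2 * α)) * Real.tanh (α * (c - u)) ≤ r u) :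
    (∫ u in (0:ℝ)..u₁, Real.exp (-2 * C₁ * ∫ s in u..u₁, r s))
      ≤ (2:ℝ) ^ (C₁ / α ^ 2) * (α / C₁) := by
  have hα2 : (0:ℝ) < α ^ 2 := by positivity
  set K : ℝ := (2:ℝ) ^ (C₁ / α ^ 2) with hK
  have hKpos : 0 < K := Real.rpow_pos_of_pos two_pos _
  -- inner integral lower bound
  have inner : ∀ u ∈ Icc (0:ℝ) u₁,
      (α * (u₁ - u) - Real.log 2) / (2 * α ^ 2) ≤ ∫ s in u..u₁, r s := by
    intro u hu'
    obtain ⟨hu0, huu1⟩ := hu'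
    set g : ℝ → ℝ := fun s => (1 / (2 * α)) * Real.tanh (α * (c - s)) with hg
    have htanh : Continuous Real.tanh := by
      have : Real.tanh = fun x => Real.sinh x / Real.cosh x := by
        funext x; exact Real.tanh_eq_sinh_div_cosh x
      rw [this]
      exact Real.continuous_sinh.div Real.continuous_cosh fun x => (Real.cosh_pos x).ne'
    have hgc : Continuous g := by
      apply Continuous.mul continuous_const
      exact htanh.comp (continuous_const.mul (continuous_const.sub continuous_id))
    have hrint : IntervalIntegrable r MeasureTheory.volume u u₁ := by
      apply ContinuousOn.intervalIntegrable
      rw [uIcc_of_le huu1]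
      exact hr.mono (Icc_subset_Icc hu0 le_rfl)
    have hmono : (∫ s in u..u₁, g s) ≤ ∫ s in u..u₁, r s := by
      apply intervalIntegral.integral_mono_on huu1 (hgc.intervalIntegrable u u₁) hrint
      intro s hs
      exact hb s ⟨le_trans hu0 hs.1, hs.2⟩
    -- compute ∫ g via antiderivative
    set F : ℝ → ℝ := fun s => -(1 / (2 * α ^ 2)) * Real.log (Real.cosh (α * (c - s))) with hF
    have hderiv : ∀ s : ℝ, HasDerivAt F (g s) s := by
      intro s
      have h1 : HasDerivAt (fun s : ℝ => α * (c - s)) (-α) s := by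
        simpa using ((hasDerivAt_id s).const_sub c).const_mul α
      have hcosh : HasDerivAt (fun s : ℝ => Real.cosh (α * (c - s)))
          (Real.sinh (α * (c - s)) * (-α)) s := (Real.hasDerivAt_cosh _).comp s h1
      have hlog := (hcosh.log (Real.cosh_pos _).ne').const_mul (-(1 / (2 * α ^ 2)))
      refine hlog.congr_deriv ?_
      rw [hg]
      simp only
      rw [Real.tanh_eq_sinh_div_cosh]
      have hcp := (Real.cosh_pos (α * (c - s))).ne'
      field_simp
    have hgval : (∫ s in u..u₁, g s) = F u₁ - F u :=
      intervalIntegral.integral_eq_sub_of_hasDerivAt (fun s _ => hderiv s)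
        (hgc.intervalIntegrable u u₁)
    -- bound F u₁ - F u below
    have hA : α * (c - u) - Real.log 2 ≤ Real.log (Real.cosh (α * (c - u))) := by
      have h2 : Real.exp (α * (c - u)) / 2 ≤ Real.cosh (α * (c - u)) := by
        rw [Real.cosh_eq]
        have := (Real.exp_pos (-(α * (c - u)))).le
        linarith
      calc α * (c - u) - Real.log 2
          = Real.log (Real.exp (α * (c - u)) / 2) := by
            rw [Real.log_div (Real.exp_pos _).ne' two_ne_zero, Real.log_exp]
        _ ≤ _ := Real.log_le_log (by positivity) h2
    have hB : Real.log (Real.cosh (α * (c - u₁))) ≤ α * (c - u₁) := by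
      have hx : 0 ≤ α * (c - u₁) := by nlinarith
      have h3 : Real.cosh (α * (c - u₁)) ≤ Real.exp (α * (c - u₁)) := by
        rw [Real.cosh_eq]
        have := Real.exp_le_exp.mpr (neg_le_self hx)
        linarith
      calc Real.log (Real.cosh (α * (c - u₁)))
          ≤ Real.log (Real.exp (α * (c - u₁))) :=
            Real.log_le_log (Real.cosh_pos _) h3
        _ = α * (c - u₁) := Real.log_exp _
    have key : α * (u₁ - u) - Real.log 2
        ≤ Real.log (Real.cosh (α * (c - u))) - Real.log (Real.cosh (α * (c - u₁))) := by
      have : α * (c - u) - α * (c - u₁) = α * (u₁ - u) := by ring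
      linarith
    have hFval : F u₁ - F u
        = (Real.log (Real.cosh (α * (c - u))) - Real.log (Real.cosh (α * (c - u₁)))) / (2 * α ^ 2) := by
      rw [hF]; field_simp; ring
    rw [hgval] at hmono
    refine le_trans ?_ hmono
    rw [hFval]
    gcongr
  -- pointwise bound on the integrand
  have point : ∀ u ∈ Icc (0:ℝ) u₁,
      Real.exp (-2 * C₁ * ∫ s in u..u₁, r s) ≤ K * Real.exp (-(C₁ / α) * (u₁ - u)) := by
    intro u hu'
    have h1 : -2 * C₁ * (∫ s in u..u₁, r s)
        ≤ -2 * C₁ * ((α * (u₁ - u) - Real.log 2) / (2 * α ^ 2)) := by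
      have := inner u hu'
      nlinarith
    calc Real.exp (-2 * C₁ * ∫ s in u..u₁, r s)
        ≤ Real.exp (-2 * C₁ * ((α * (u₁ - u) - Real.log 2) / (2 * α ^ 2))) :=
          Real.exp_le_exp.mpr h1
      _ = K * Real.exp (-(C₁ / α) * (u₁ - u)) := by
          rw [hK, Real.rpow_def_of_pos two_pos, ← Real.exp_add]
          congr 1
          field_simp
          ring
  -- integrability of the LHS integrand
  have hrint0 : MeasureTheory.IntegrableOn r (uIcc 0 u₁) MeasureTheory.volume := by
    rw [uIcc_of_le hu]
    exact hr.integrableOn_compact isCompact_Icc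
  have hcont : ContinuousOn (fun u => ∫ s in u..u₁, r s) (Icc 0 u₁) := by
    have := intervalIntegral.continuousOn_primitive_interval_left hrint0
    rwa [uIcc_of_le hu] at this
  have hleft : IntervalIntegrable (fun u => Real.exp (-2 * C₁ * ∫ s in u..u₁, r s))
      MeasureTheory.volume 0 u₁ := by
    apply ContinuousOn.intervalIntegrable
    rw [uIcc_of_le hu]
    exact Real.continuous_exp.comp_continuousOn (continuousOn_const.mul hcont)
  have hright : IntervalIntegrable (fun u => K * Real.exp (-(C₁ / α) * (u₁ - u)))
      MeasureTheory.volume 0 u₁ := by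
    apply Continuous.intervalIntegrable
    exact continuous_const.mul (Real.continuous_exp.comp (continuous_const.mul (continuous_const.sub continuous_id)))
  have step1 : (∫ u in (0:ℝ)..u₁, Real.exp (-2 * C₁ * ∫ s in u..u₁, r s))
      ≤ ∫ u in (0:ℝ)..u₁, K * Real.exp (-(C₁ / α) * (u₁ - u)) :=
    intervalIntegral.integral_mono_on hu hleft hright point
  -- compute the RHS integral
  set G : ℝ → ℝ := fun u => K * (α / C₁) * Real.exp (-(C₁ / α) * (u₁ - u)) with hG
  have hGderiv : ∀ u : ℝ, HasDerivAt G (K * Real.exp (-(C₁ / α) * (u₁ - u))) u := by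
    intro u
    have h1 : HasDerivAt (fun u : ℝ => -(C₁ / α) * (u₁ - u)) (C₁ / α) u := by
      simpa using ((hasDerivAt_id u).const_sub u₁).const_mul (-(C₁ / α))
    have h2 := (h1.exp).const_mul (K * (α / C₁))
    refine h2.congr_deriv ?_
    field_simp
  have hval : (∫ u in (0:ℝ)..u₁, K * Real.exp (-(C₁ / α) * (u₁ - u))) = G u₁ - G 0 := by
    apply intervalIntegral.integral_eq_sub_of_hasDerivAt (fun u _ => hGderiv u)
    apply Continuous.intervalIntegrable
    exact continuous_const.mul (Real.continuous_exp.comp (continuous_const.mul (continuous_const.sub continuous_id)))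
  have hfin : G u₁ - G 0 ≤ K * (α / C₁) := by
    rw [hG]
    simp only
    have h0 : 0 < Real.exp (-(C₁ / α) * (u₁ - 0)) := Real.exp_pos _
    have : Real.exp (-(C₁ / α) * (u₁ - u₁)) = 1 := by norm_num
    rw [this]
    nlinarith [mul_pos hKpos (div_pos hα hC)]
  calc (∫ u in (0:ℝ)..u₁, Real.exp (-2 * C₁ * ∫ s in u..u₁, r s))
      ≤ ∫ u in (0:ℝ)..u₁, K * Real.exp (-(C₁ / α) * (u₁ - u)) := step1
    _ = G u₁ - G 0 := hval
    _ ≤ K * (α / C₁) := hfin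
end
end

section
/- Let a ≥ 1, x ≥ 0, and let g : [0,∞) → ℝ be continuously differentiable with |g'(r)| ≤ x·(a+r)^{−4} for all r ≥ 0. Define ḡ(r) = (1/r)∫₀ʳ g(s) ds for r > 0. Then for every r > 0, |g(r) − ḡ(r)| ≤ x / (a²(a+r)). -/
noncomputable section

open Real Set

lemma pow_antideriv (a x : ℝ) (ha : 0 < a) {s r : ℝ} (hs : 0 ≤ s) (hsr : s ≤ r) :
    ∫ t in s..r, x / (a + t) ^ 4 = x / 3 * (1 / (a + s) ^ 3 - 1 / (a + r) ^ 3) := by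
  have key : ∀ t ∈ Set.uIcc s r, HasDerivAt (fun t => -(x/3) * (1 / (a + t) ^ 3)) (x / (a + t) ^ 4) t := by
    intro t ht
    rw [Set.uIcc_of_le hsr] at ht
    have hat : 0 < a + t := by linarith [ht.1]
    have h0 : HasDerivAt (fun t : ℝ => a + t) 1 t := (hasDerivAt_id t).const_add a
    have h1 : HasDerivAt (fun t : ℝ => (a + t) ^ 3) (3 * (a + t) ^ 2) t := by
      simpa using h0.fun_pow 3
    have h2 := h1.fun_inv (by positivity)
    have h3 := h2.const_mul (-(x/3))
    have hval : -(x/3) * (-(3 * (a + t) ^ 2) / ((a + t) ^ 3) ^ 2) = x / (a + t) ^ 4 := by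
      field_simp
    simpa only [one_div, hval] using h3
  have hint : IntervalIntegrable (fun t => x / (a + t) ^ 4) MeasureTheory.volume s r := by
    apply ContinuousOn.intervalIntegrable
    apply continuousOn_const.div (by fun_prop)
    intro t ht
    rw [Set.uIcc_of_le hsr] at ht
    have : 0 < a + t := by linarith [ht.1]
    positivity
  rw [intervalIntegral.integral_eq_sub_of_hasDerivAt key hint]
  ring

lemma pow_antideriv3 (a x : ℝ) (ha : 0 < a) {r : ℝ} (hr : 0 ≤ r) :
    ∫ s in (0:ℝ)..r, x / 3 * (1 / (a + s) ^ 3) = x / 6 * (1 / a ^ 2 - 1 / (a + r) ^ 2) := by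
  have key : ∀ t ∈ Set.uIcc (0:ℝ) r, HasDerivAt (fun t => -(x/6) * (1 / (a + t) ^ 2))
      (x / 3 * (1 / (a + t) ^ 3)) t := by
    intro t ht
    rw [Set.uIcc_of_le hr] at ht
    have hat : 0 < a + t := by linarith [ht.1]
    have h0 : HasDerivAt (fun t : ℝ => a + t) 1 t := (hasDerivAt_id t).const_add a
    have h1 : HasDerivAt (fun t : ℝ => (a + t) ^ 2) (2 * (a + t) ^ 1) t := by
      simpa using h0.fun_pow 2
    have h2 := h1.fun_inv (by positivity)
    have h3 := h2.const_mul (-(x/6))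
    have hval : -(x/6) * (-(2 * (a + t) ^ 1) / ((a + t) ^ 2) ^ 2) = x / 3 * (1 / (a + t) ^ 3) := by
      field_simp
      ring
    simpa only [one_div, hval] using h3
  have hint : IntervalIntegrable (fun t => x / 3 * (1 / (a + t) ^ 3)) MeasureTheory.volume 0 r := by
    apply ContinuousOn.intervalIntegrable
    apply continuousOn_const.mul
    apply continuousOn_const.div (by fun_prop)
    intro t ht
    rw [Set.uIcc_of_le hr] at ht
    have : 0 < a + t := by linarith [ht.1]
    positivity
  rw [intervalIntegral.integral_eq_sub_of_hasDerivAt key hint]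
  ring

/-- Christodoulou's fundamental estimate for the radial average:
if `|g'(r)| ≤ x(a+r)^{−4}` on `[0,∞)` with `a ≥ 1`, then for `ḡ(r) = (1/r)∫₀ʳ g`,
`|g(r) − ḡ(r)| ≤ x/(a²(a+r))` for every `r > 0`. -/
theorem radial_average_decay_estimate
    (a x : ℝ) (ha : 1 ≤ a) (hx : 0 ≤ x) (g g' : ℝ → ℝ)
    (hd : ∀ r ∈ Ici (0:ℝ), HasDerivWithinAt g (g' r) (Ici 0) r)
    (hc : ContinuousOn g' (Ici 0))
    (hb : ∀ r ∈ Ici (0:ℝ), |g' r| ≤ x / (a + r) ^ 4) :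
    ∀ r > (0:ℝ), |g r - (1 / r) * ∫ s in (0:ℝ)..r, g s| ≤ x / (a ^ 2 * (a + r)) := by
  intro r hr
  have ha0 : (0:ℝ) < a := by linarith
  have har : 0 < a + r := by linarith
  have hgcont : ContinuousOn g (Ici 0) := fun t ht => (hd t ht).continuousWithinAt
  -- Step A: pointwise bound
  have stepA : ∀ s ∈ Icc (0:ℝ) r, |g r - g s| ≤ x / 3 * (1 / (a + s) ^ 3) := by
    intro s hs
    have hs0 : (0:ℝ) ≤ s := hs.1
    have hsr : s ≤ r := hs.2
    have hsub : Icc s r ⊆ Ici (0:ℝ) := fun t ht => le_trans hs0 ht.1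
    have hg'int : IntervalIntegrable g' MeasureTheory.volume s r := by
      apply ContinuousOn.intervalIntegrable
      rw [Set.uIcc_of_le hsr]
      exact hc.mono hsub
    have hftc : ∫ t in s..r, g' t = g r - g s := by
      apply intervalIntegral.integral_eq_sub_of_hasDeriv_right_of_le hsr
        (hgcont.mono hsub) _ hg'int
      intro t ht
      have ht0 : (0:ℝ) < t := lt_of_le_of_lt hs0 ht.1
      exact ((hd t (le_of_lt ht0)).hasDerivAt (Ici_mem_nhds ht0)).hasDerivWithinAt
    have hbint : IntervalIntegrable (fun t => x / (a + t) ^ 4) MeasureTheory.volume s r := by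
      apply ContinuousOn.intervalIntegrable
      apply continuousOn_const.div (by fun_prop)
      intro t ht
      rw [Set.uIcc_of_le hsr] at ht
      have : 0 < a + t := by linarith [ht.1, hs0]
      positivity
    calc |g r - g s| = |∫ t in s..r, g' t| := by rw [hftc]
      _ ≤ ∫ t in s..r, |g' t| := by
          simpa using intervalIntegral.norm_integral_le_integral_norm (f := g') (μ := MeasureTheory.volume) hsr
      _ ≤ ∫ t in s..r, x / (a + t) ^ 4 := by
          apply intervalIntegral.integral_mono_on hsr hg'int.abs hbint
          intro t ht
          exact hb t (hsub ht)
      _ = x / 3 * (1 / (a + s) ^ 3 - 1 / (a + r) ^ 3) := pow_antideriv a x ha0 hs0 hsr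
      _ ≤ x / 3 * (1 / (a + s) ^ 3) := by
          apply mul_le_mul_of_nonneg_left _ (by positivity)
          have : 0 < (a + r) ^ 3 := by positivity
          have : 0 ≤ 1 / (a + r) ^ 3 := by positivity
          linarith
  -- integrability facts on [0, r]
  have hsub0 : Icc (0:ℝ) r ⊆ Ici (0:ℝ) := fun t ht => ht.1
  have hgint : IntervalIntegrable g MeasureTheory.volume 0 r := by
    apply ContinuousOn.intervalIntegrable
    rw [Set.uIcc_of_le hr.le]
    exact hgcont.mono hsub0
  have habsint : IntervalIntegrable (fun s => |g r - g s|) MeasureTheory.volume 0 r := by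
    apply ContinuousOn.intervalIntegrable
    rw [Set.uIcc_of_le hr.le]
    exact ((continuousOn_const.sub (hgcont.mono hsub0)).abs)
  have hHint : IntervalIntegrable (fun s => x / 3 * (1 / (a + s) ^ 3)) MeasureTheory.volume 0 r := by
    apply ContinuousOn.intervalIntegrable
    apply continuousOn_const.mul
    apply continuousOn_const.div (by fun_prop)
    intro t ht
    rw [Set.uIcc_of_le hr.le] at ht
    have : 0 < a + t := by linarith [ht.1]
    positivity
  -- rewrite the difference
  have hrw : g r - (1 / r) * ∫ s in (0:ℝ)..r, g s
      = (1 / r) * ∫ s in (0:ℝ)..r, (g r - g s) := by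
    rw [intervalIntegral.integral_sub intervalIntegrable_const hgint]
    simp
    field_simp
  rw [hrw, abs_mul, abs_of_nonneg (by positivity : (0:ℝ) ≤ 1 / r)]
  have hmain : |∫ s in (0:ℝ)..r, (g r - g s)| ≤ x / 6 * (1 / a ^ 2 - 1 / (a + r) ^ 2) := by
    calc |∫ s in (0:ℝ)..r, (g r - g s)| ≤ ∫ s in (0:ℝ)..r, |g r - g s| := by
          simpa using intervalIntegral.norm_integral_le_integral_norm
            (f := fun s => g r - g s) (μ := MeasureTheory.volume) hr.le
      _ ≤ ∫ s in (0:ℝ)..r, x / 3 * (1 / (a + s) ^ 3) := by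
          apply intervalIntegral.integral_mono_on hr.le habsint hHint
          intro s hs
          exact stepA s hs
      _ = x / 6 * (1 / a ^ 2 - 1 / (a + r) ^ 2) := pow_antideriv3 a x ha0 hr.le
  calc 1 / r * |∫ s in (0:ℝ)..r, (g r - g s)|
      ≤ 1 / r * (x / 6 * (1 / a ^ 2 - 1 / (a + r) ^ 2)) := by
        apply mul_le_mul_of_nonneg_left hmain (by positivity)
    _ ≤ x / (a ^ 2 * (a + r)) := by
        have h1 : 1 / a ^ 2 - 1 / (a + r) ^ 2 = r * (2 * a + r) / (a ^ 2 * (a + r) ^ 2) := by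
          field_simp
          ring
        have h2 : 1 / r * (x / 6 * (r * (2 * a + r) / (a ^ 2 * (a + r) ^ 2)))
            = x * (2 * a + r) / (6 * (a ^ 2 * (a + r) ^ 2)) := by
          field_simp
        rw [h1, h2, div_le_div_iff₀ (by positivity) (by positivity)]
        nlinarith [mul_nonneg (mul_nonneg (mul_nonneg hx (sq_nonneg a)) har.le)
          (by linarith : (0:ℝ) ≤ 4 * a + 5 * r)]
end
end
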